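/- Assuming DC, the Ketonen order on countably complete filters over an ordinal is wellfounded: there is no infinite descending sequence F_0 ▷ F_1 ▷ ⋯ where F ◁ G means F ⊆ G-lim_{α<δ} F_α with each F_α a countably complete filter over δ containing α. -/

import Mathlib

/-- A filter is countably complete if it is closed under countable intersections. -/
def FCC {T : Type*} (F : Filter T) : Prop :=
  ∀ f : ℕ → Set T, (∀ n, f n ∈ F) → (⋂ n, f n) ∈ F

/-- The strict Ketonen order on countably complete filters over the ordinal `δ`:
`F ◁ G` iff `F ⊆ G-lim_{α<δ} Z_α` where for `G`-almost all `α`, `Z_α` is a (proper)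
countably complete filter over `δ` containing `α` (i.e. the set of ordinals `< α`). -/
def FKetLT (δ : Ordinal.{u}) (F G : Filter {α : Ordinal.{u} // α < δ}) : Prop :=
  ∃ Z : {α : Ordinal.{u} // α < δ} → Filter {α : Ordinal.{u} // α < δ},
    {α | FCC (Z α) ∧ (Z α).NeBot ∧ Set.Iio α ∈ Z α} ∈ G ∧
    ∀ A ∈ F, {α | A ∈ Z α} ∈ G

/-- (DC holds in Lean's metatheory.) The Ketonen order on countably
complete (proper) filters over an ordinal is wellfounded: there is no infinite
descending sequence `F₀ ▷ F₁ ▷ ⋯`. -/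
theorem stmt6 :
    ¬ ∃ (δ : Ordinal.{u}) (F : ℕ → Filter {α : Ordinal.{u} // α < δ}),
      (∀ n, (F n).NeBot) ∧ (∀ n, FCC (F n)) ∧ ∀ n, FKetLT δ (F (n + 1)) (F n) := by
  rintro ⟨δ, F, hNB, hFCC, hKet⟩
  choose Z hZS hZA using hKet
  set S : ℕ → Set {α : Ordinal.{u} // α < δ} :=
    fun n => {α | FCC (Z n α) ∧ (Z n α).NeBot ∧ Set.Iio α ∈ Z n α} with hS
  -- iterated approximations
  let Bk : ℕ → ℕ → Set {α : Ordinal.{u} // α < δ} :=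
    fun k => Nat.rec (fun n => S n) (fun _ ih n => S n ∩ {α | ih (n + 1) ∈ Z n α}) k
  have hBk : ∀ k n, Bk k n ∈ F n := by
    intro k
    induction k with
    | zero => intro n; exact hZS n
    | succ k ih =>
        intro n
        exact Filter.inter_mem (hZS n) (hZA n _ (ih (n + 1)))
  set B : ℕ → Set {α : Ordinal.{u} // α < δ} := fun n => ⋂ k, Bk k n with hB
  have hBF : ∀ n, B n ∈ F n := fun n => hFCC n _ (fun k => hBk k n)
  have hBS : ∀ n α, α ∈ B n → α ∈ S n := by
    intro n α hα
    exact Set.mem_iInter.1 hα 0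
  have hBZ : ∀ n α, α ∈ B n → B (n + 1) ∈ Z n α := by
    intro n α hα
    have hcc : FCC (Z n α) := (hBS n α hα).1
    exact hcc _ (fun k => (Set.mem_iInter.1 hα (k + 1)).2)
  have hstep : ∀ n (a : {α : Ordinal.{u} // α < δ}), a ∈ B n →
      ∃ b, b ∈ B (n + 1) ∧ b < a := by
    intro n a ha
    have hSa := hBS n a ha
    have hmem : B (n + 1) ∩ Set.Iio a ∈ Z n a :=
      Filter.inter_mem (hBZ n a ha) hSa.2.2
    haveI := hSa.2.1
    obtain ⟨b, hb1, hb2⟩ := Filter.nonempty_of_mem hmem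
    exact ⟨b, hb1, hb2⟩
  have h0 : ∃ a, a ∈ B 0 := Filter.nonempty_of_mem (hBF 0)
  let f : (n : ℕ) → {a : {α : Ordinal.{u} // α < δ} // a ∈ B n} :=
    fun n => Nat.rec ⟨h0.choose, h0.choose_spec⟩
      (fun n p => ⟨(hstep n p.1 p.2).choose, (hstep n p.1 p.2).choose_spec.1⟩) n
  have hdec : ∀ n : ℕ, ((f (n + 1)).1 : Ordinal.{u}) < (f n).1 :=
    fun n => (hstep n (f n).1 (f n).2).choose_spec.2
  -- a strictly decreasing sequence of ordinals is impossible
  set g : ℕ → Ordinal.{u} := fun n => ((f n).1 : Ordinal.{u}) with hg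
  have hne : (Set.range g).Nonempty := ⟨g 0, ⟨0, rfl⟩⟩
  obtain ⟨k, hk⟩ := Ordinal.lt_wf.min_mem (Set.range g) hne
  exact Ordinal.lt_wf.not_lt_min (Set.range g) ⟨k + 1, rfl⟩ (hk ▸ hdec k)
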